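/- arXiv:2301.02355 — 2 statements merged into one kernel-verified Lean document; each statement's English description precedes it below -/
import Mathlib

section
/- Let d ≥ 2 be an integer, let λ, μ, ω be real constants with μ > 0, λ + 2μ > 0, ω > 0, and set k_s := ω/√μ. Let f₀, f₁, f₂ : (0,∞) → ℂ with f₀, f₁ differentiable and satisfying f₀'(z) = −f₁(z), f₁'(z) = f₁(z)/z − f₂(z), and d·f₁(z)/z = f₀(z) + f₂(z) for all z > 0. Fix y ∈ ℝ^d and define Φ_s(x) := f₀(k_s|x−y|) and the d×d shear Green tensor G_s(x) with entries (G_s(x))_{ij} = (1/μ)(Φ_s(x) δ_{ij} + (1/k_s²) ∂_{x_i}∂_{x_j} Φ_s(x)), where δ_{ij} is the Kronecker delta. Then for every x ∈ ℝ^d with x ≠ y, the trace of G_s(x) equals (d−1)Φ_s(x)/μ. -/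
/-- Partial derivative ∂_i of a complex-valued function on ℝ^d. -/
noncomputable def pd {d : ℕ} (i : Fin d) (f : EuclideanSpace ℝ (Fin d) → ℂ) :
    EuclideanSpace ℝ (Fin d) → ℂ :=
  fun x => fderiv ℝ f x (EuclideanSpace.single i 1)

/-- Second partial derivative ∂_i ∂_j. -/
noncomputable def pd2 {d : ℕ} (i j : Fin d) (f : EuclideanSpace ℝ (Fin d) → ℂ) :
    EuclideanSpace ℝ (Fin d) → ℂ :=
  pd i (pd j f)

lemma myhelper.comp_ofReal {E : Type*} [NormedAddCommGroup E] [NormedSpace ℝ E]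
    {f : ℝ → ℂ} {c : ℂ} {g : E → ℝ} {g' : E →L[ℝ] ℝ} {x : E}
    (hf : HasDerivAt f c (g x)) (hg : HasFDerivAt g g' x) :
    HasFDerivAt (fun w => f (g w)) (g'.smulRight c) x := by
  have h := hf.hasFDerivAt.comp x hg
  refine h.congr_fderiv ?_
  ext v
  simp [ContinuousLinearMap.smulRight_apply]

lemma myhelper.norm_deriv {d : ℕ} (y x : EuclideanSpace ℝ (Fin d)) (hx : x ≠ y) :
    HasFDerivAt (fun w : EuclideanSpace ℝ (Fin d) => ‖w - y‖)
      ((‖x - y‖⁻¹) • innerSL ℝ (x - y)) x := by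
  have hr : (0:ℝ) < ‖x - y‖ := norm_sub_pos_iff.mpr hx
  have h1 : HasFDerivAt (fun w : EuclideanSpace ℝ (Fin d) => ‖w - y‖ ^ 2)
      (2 • (innerSL ℝ (x - y)).comp (ContinuousLinearMap.id ℝ _)) x :=
    ((hasFDerivAt_id x).sub_const y).norm_sq
  have h2 : HasDerivAt Real.sqrt (1 / (2 * Real.sqrt (‖x - y‖ ^ 2))) (‖x - y‖ ^ 2) :=
    Real.hasDerivAt_sqrt (by positivity)
  have h3 := h2.comp_hasFDerivAt x h1
  have hfun : (Real.sqrt ∘ fun w : EuclideanSpace ℝ (Fin d) => ‖w - y‖ ^ 2)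
      = fun w => ‖w - y‖ := by
    funext w; simp [Function.comp, Real.sqrt_sq (norm_nonneg _)]
  rw [hfun] at h3
  refine h3.congr_fderiv ?_
  rw [Real.sqrt_sq hr.le]
  ext v
  simp only [ContinuousLinearMap.smul_apply, ContinuousLinearMap.comp_apply,
    ContinuousLinearMap.id_apply, smul_eq_mul, ContinuousLinearMap.coe_smul',
    Pi.smul_apply, nsmul_eq_mul]
  field_simp
  ring

lemma myhelper.scaled_norm_deriv {d : ℕ} (ks : ℝ) (y x : EuclideanSpace ℝ (Fin d))
    (hx : x ≠ y) :
    HasFDerivAt (fun w : EuclideanSpace ℝ (Fin d) => ks * ‖w - y‖)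
      ((ks * ‖x - y‖⁻¹) • innerSL ℝ (x - y)) x := by
  have := (myhelper.norm_deriv y x hx).const_mul ks
  rwa [smul_smul] at this

set_option maxHeartbeats 1600000 in
/-- Trace of the shear Green tensor `G_s` equals `(d-1)Φ_s/μ`. -/
theorem trace_shear_green_tensor
    (d : ℕ) (hd : 2 ≤ d)
    (lam mu om : ℝ) (hmu : 0 < mu) (hlm : 0 < lam + 2 * mu) (hom : 0 < om)
    (ks : ℝ) (hks : ks = om / Real.sqrt mu)
    (f0 f1 f2 : ℝ → ℂ)
    (hf0 : ∀ z : ℝ, 0 < z → HasDerivAt f0 (-(f1 z)) z)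
    (hf1 : ∀ z : ℝ, 0 < z → HasDerivAt f1 (f1 z / (z : ℂ) - f2 z) z)
    (hrec : ∀ z : ℝ, 0 < z → (d : ℂ) * f1 z / (z : ℂ) = f0 z + f2 z)
    (y : EuclideanSpace ℝ (Fin d))
    (Φs : EuclideanSpace ℝ (Fin d) → ℂ)
    (hΦs : ∀ x, Φs x = f0 (ks * ‖x - y‖))
    (Gs : EuclideanSpace ℝ (Fin d) → Matrix (Fin d) (Fin d) ℂ)
    (hGs : ∀ x (i j : Fin d), Gs x i j =
      ((1 / mu : ℝ) : ℂ) * (Φs x * (if i = j then 1 else 0)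
        + ((1 / ks ^ 2 : ℝ) : ℂ) * pd2 i j Φs x)) :
    ∀ x : EuclideanSpace ℝ (Fin d), x ≠ y →
      (Gs x).trace = ((d : ℂ) - 1) * Φs x / ((mu : ℝ) : ℂ) := by
  intro x hx
  have hks0 : 0 < ks := by rw [hks]; exact div_pos hom (Real.sqrt_pos.mpr hmu)
  have hr : (0:ℝ) < ‖x - y‖ := norm_sub_pos_iff.mpr hx
  have hz : (0:ℝ) < ks * ‖x - y‖ := by positivity
  have hΦeq : Φs = fun v => f0 (ks * ‖v - y‖) := funext hΦs
  set F : Fin d → EuclideanSpace ℝ (Fin d) → ℂ := fun j w =>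
    -(ks : ℂ) * (f1 (ks * ‖w - y‖) * (((w - y) j * ‖w - y‖⁻¹ : ℝ) : ℂ)) with hF_def
  -- first derivative formula
  have pdval : ∀ (j : Fin d) (w : EuclideanSpace ℝ (Fin d)), w ≠ y →
      pd j Φs w = F j w := by
    intro j w hw
    have hrw : (0:ℝ) < ‖w - y‖ := norm_sub_pos_iff.mpr hw
    have hkey : HasFDerivAt Φs
        (((ks * ‖w - y‖⁻¹) • innerSL ℝ (w - y)).smulRight (-(f1 (ks * ‖w - y‖)))) w := by
      rw [hΦeq]
      exact myhelper.comp_ofReal (hf0 _ (by positivity)) (myhelper.scaled_norm_deriv ks y w hw)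
    unfold pd
    rw [hkey.fderiv, hF_def]
    simp [ContinuousLinearMap.smulRight_apply, ContinuousLinearMap.smul_apply,
      innerSL_apply_apply, EuclideanSpace.inner_single_right, Complex.real_smul]
    ring
  -- abbreviations for the second-derivative coefficients
  set P : ℂ := ((ks / ‖x - y‖^3 : ℝ) : ℂ) * f1 (ks * ‖x - y‖)
      - ((ks^2 / ‖x - y‖^2 : ℝ) : ℂ) *
        (f1 (ks * ‖x - y‖) / ((ks * ‖x - y‖ : ℝ) : ℂ) - f2 (ks * ‖x - y‖)) with hP_def
  set Q : ℂ := -((ks / ‖x - y‖ : ℝ) : ℂ) * f1 (ks * ‖x - y‖) with hQ_def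
  have hrne : ((‖x - y‖ : ℝ) : ℂ) ≠ 0 := by exact_mod_cast hr.ne'
  have hkne : ((ks : ℝ) : ℂ) ≠ 0 := by exact_mod_cast hks0.ne'
  -- second derivative values on the diagonal
  have hpd2 : ∀ j : Fin d,
      pd2 j j Φs x = ((((x - y) j)^2 : ℝ) : ℂ) * P + Q := by
    intro j
    have hnorm := myhelper.norm_deriv y x hx
    have hscaled := myhelper.scaled_norm_deriv ks y x hx
    have hA : HasFDerivAt (fun w : EuclideanSpace ℝ (Fin d) => f1 (ks * ‖w - y‖))
        (((ks * ‖x - y‖⁻¹) • innerSL ℝ (x - y)).smulRight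
          (f1 (ks * ‖x - y‖) / ((ks * ‖x - y‖ : ℝ) : ℂ) - f2 (ks * ‖x - y‖))) x :=
      myhelper.comp_ofReal (hf1 (ks * ‖x - y‖) hz) hscaled
    have hq : HasFDerivAt (fun w : EuclideanSpace ℝ (Fin d) => (w - y) j)
        (PiLp.proj (𝕜 := ℝ) 2 (fun _ : Fin d => ℝ) j) x := by
      have h := (PiLp.proj (𝕜 := ℝ) 2 (fun _ : Fin d => ℝ) j).hasFDerivAt.comp x
        ((hasFDerivAt_id x).sub_const y)
      simpa [Function.comp_def] using h
    have hinv : HasFDerivAt (fun w : EuclideanSpace ℝ (Fin d) => ‖w - y‖⁻¹)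
        ((-(‖x - y‖^2)⁻¹) • ((‖x - y‖⁻¹) • innerSL ℝ (x - y))) x :=
      (hasDerivAt_inv hr.ne').comp_hasFDerivAt x hnorm
    have hB := hq.mul hinv
    have hBc := Complex.ofRealCLM.hasFDerivAt.comp x hB
    have hprod := hA.mul hBc
    have hF := hprod.const_mul (-(ks : ℂ))
    have heq : pd j Φs =ᶠ[nhds x] F j := by
      filter_upwards [compl_singleton_mem_nhds hx] with w hw
      exact pdval j w hw
    have happ : pd2 j j Φs x = fderiv ℝ (F j) x (EuclideanSpace.single j 1) := by
      show (fderiv ℝ (pd j Φs) x) (EuclideanSpace.single j 1) = _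
      rw [heq.fderiv_eq]
    have hFeq : F j = fun w => -(ks : ℂ) * (f1 (ks * ‖w - y‖) *
        (⇑Complex.ofRealCLM ∘ fun v : EuclideanSpace ℝ (Fin d) => (v - y) j * ‖v - y‖⁻¹) w) := by
      funext w
      simp [hF_def, Function.comp]
    have hF' : HasFDerivAt (fun w : EuclideanSpace ℝ (Fin d) => -(ks : ℂ) * (f1 (ks * ‖w - y‖) *
        (⇑Complex.ofRealCLM ∘ fun v : EuclideanSpace ℝ (Fin d) => (v - y) j * ‖v - y‖⁻¹) w)) _ x := hF
    rw [happ, hFeq, hF'.fderiv, hP_def, hQ_def]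
    simp only [ContinuousLinearMap.add_apply, ContinuousLinearMap.smul_apply,
      ContinuousLinearMap.smulRight_apply, ContinuousLinearMap.comp_apply,
      Complex.ofRealCLM_apply, innerSL_apply_apply, EuclideanSpace.inner_single_right,
      PiLp.proj_apply, EuclideanSpace.single_apply, Complex.real_smul, smul_eq_mul,
      Function.comp_apply, Pi.mul_apply, conj_trivial]
    push_cast
    field_simp
    ring
  -- sum of squares of coordinates
  have hsum : ∑ j : Fin d, ((x - y) j)^2 = ‖x - y‖^2 := by
    rw [EuclideanSpace.norm_eq, Real.sq_sqrt (by positivity)]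
    exact Finset.sum_congr rfl fun j _ => by rw [Real.norm_eq_abs, sq_abs]
  -- the trace
  have htr : (Gs x).trace = ∑ j : Fin d,
      (((1 / mu : ℝ) : ℂ) * (Φs x + ((1 / ks ^ 2 : ℝ) : ℂ) * Q)
        + (((1 / mu : ℝ) : ℂ) * ((1 / ks ^ 2 : ℝ) : ℂ) * P) * ((((x - y) j)^2 : ℝ) : ℂ)) := by
    rw [Matrix.trace]
    refine Finset.sum_congr rfl fun j _ => ?_
    rw [Matrix.diag_apply, hGs, hpd2 j, if_pos rfl]
    ring
  rw [htr, Finset.sum_add_distrib, Finset.sum_const, ← Finset.mul_sum, ← Complex.ofReal_sum,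
    hsum, Finset.card_univ, Fintype.card_fin, nsmul_eq_mul]
  -- final algebra
  have hf2 : f2 (ks * ‖x - y‖) =
      (d : ℂ) * f1 (ks * ‖x - y‖) / ((ks * ‖x - y‖ : ℝ) : ℂ) - f0 (ks * ‖x - y‖) := by
    have h := hrec (ks * ‖x - y‖) hz
    linear_combination -h
  have hmune : ((mu : ℝ) : ℂ) ≠ 0 := by exact_mod_cast hmu.ne'
  rw [hP_def, hQ_def, hf2, hΦs x]
  push_cast
  field_simp
  ring_nf
end

section
/- Let d ≥ 1 be an integer, k > 0, and let f₀, f₁ : (0,∞) → ℂ be differentiable and f₂ : (0,∞) → ℂ a function such that f₀'(z) = −f₁(z), f₁'(z) = f₁(z)/z − f₂(z), and d·f₁(z)/z = f₀(z) + f₂(z) for all z > 0. Fix y ∈ ℝ^d and define u(x) := f₀(k|x−y|). Then u satisfies the Helmholtz equation away from y: for every x ≠ y, Δu(x) + k² u(x) = 0, where Δu := Σ_{i=1}^d ∂_{x_i}∂_{x_i} u. -/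
open scoped RealInnerProductSpace

/-- Derivative of the distance-to-`y` function away from `y`. -/
lemma helmholtz_aux_norm_hfd {d : ℕ} (y x : EuclideanSpace ℝ (Fin d)) (hx : x ≠ y) :
    HasFDerivAt (fun x : EuclideanSpace ℝ (Fin d) => ‖x - y‖)
      ((‖x - y‖)⁻¹ • (innerSL ℝ (x - y))) x := by
  have hsub : HasFDerivAt (fun x : EuclideanSpace ℝ (Fin d) => x - y)
      (ContinuousLinearMap.id ℝ (EuclideanSpace ℝ (Fin d))) x :=
    (hasFDerivAt_id x).sub_const y
  have hnsq : HasFDerivAt (fun x : EuclideanSpace ℝ (Fin d) => ‖x - y‖ ^ 2)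
      (2 • (innerSL ℝ (x - y)).comp (ContinuousLinearMap.id ℝ (EuclideanSpace ℝ (Fin d)))) x :=
    hsub.norm_sq
  have hr0 : (0 : ℝ) < ‖x - y‖ := by rw [norm_pos_iff, sub_ne_zero]; exact hx
  have hne : (‖x - y‖ ^ 2 : ℝ) ≠ 0 := by positivity
  have hsqrt : HasDerivAt Real.sqrt (1 / (2 * Real.sqrt (‖x - y‖ ^ 2))) (‖x - y‖ ^ 2) :=
    Real.hasDerivAt_sqrt hne
  have h := hsqrt.comp_hasFDerivAt x hnsq
  have heq : (Real.sqrt ∘ fun x : EuclideanSpace ℝ (Fin d) => ‖x - y‖ ^ 2)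
      = fun x : EuclideanSpace ℝ (Fin d) => ‖x - y‖ := by
    funext z; simp [Function.comp, Real.sqrt_sq (norm_nonneg _)]
  rw [heq] at h
  refine h.congr_fderiv ?_
  rw [Real.sqrt_sq (norm_nonneg _)]
  ext v
  simp [ContinuousLinearMap.smul_apply]
  field_simp

set_option maxHeartbeats 1000000 in
/-- `u(x) = f₀(k|x−y|)` satisfies the Helmholtz equation `Δu + k²u = 0` away from `y`,
provided `f₀, f₁, f₂` satisfy the Hankel-type recurrences. -/
theorem radial_wave_satisfies_helmholtz
    (d : ℕ) (hd : 1 ≤ d) (k : ℝ) (hk : 0 < k)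
    (f0 f1 : ℝ → ℂ) (f2 : ℝ → ℂ)
    (hf0 : ∀ z : ℝ, 0 < z → HasDerivAt f0 (-(f1 z)) z)
    (hf1 : ∀ z : ℝ, 0 < z → HasDerivAt f1 (f1 z / (z : ℂ) - f2 z) z)
    (hrec : ∀ z : ℝ, 0 < z → (d : ℂ) * f1 z / (z : ℂ) = f0 z + f2 z)
    (y : EuclideanSpace ℝ (Fin d))
    (u : EuclideanSpace ℝ (Fin d) → ℂ)
    (hu : ∀ x, u x = f0 (k * ‖x - y‖)) :
    ∀ x : EuclideanSpace ℝ (Fin d), x ≠ y →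
      (∑ i : Fin d, pd2 i i u x) + ((k ^ 2 : ℝ) : ℂ) * u x = 0 := by
  -- first derivatives
  have key1 : ∀ x : EuclideanSpace ℝ (Fin d), x ≠ y → ∀ i : Fin d,
      pd i u x = -(f1 (k * ‖x - y‖)) * ((k * ((x i - y i) * (‖x - y‖)⁻¹) : ℝ) : ℂ) := by
    intro x hx i
    have hr0 : (0 : ℝ) < ‖x - y‖ := by rw [norm_pos_iff, sub_ne_zero]; exact hx
    have hg : HasFDerivAt (fun x : EuclideanSpace ℝ (Fin d) => k * ‖x - y‖)
        (k • ((‖x - y‖)⁻¹ • (innerSL ℝ (x - y)))) x :=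
      (helmholtz_aux_norm_hfd y x hx).const_mul k
    have h0 : HasDerivAt f0 (-(f1 (k * ‖x - y‖))) (k * ‖x - y‖) :=
      hf0 _ (by positivity)
    have hD : HasFDerivAt u
        ((ContinuousLinearMap.smulRight (1 : ℝ →L[ℝ] ℝ) (-(f1 (k * ‖x - y‖)))).comp
          (k • ((‖x - y‖)⁻¹ • (innerSL ℝ (x - y))))) x := by
      have hufun : u = f0 ∘ (fun x : EuclideanSpace ℝ (Fin d) => k * ‖x - y‖) :=
        funext fun x => hu x
      rw [hufun]
      exact h0.hasFDerivAt.comp x hg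
    rw [pd, hD.fderiv]
    simp [EuclideanSpace.inner_single_right, PiLp.sub_apply, Complex.real_smul]
    push_cast
    ring
  intro x hx
  have hr0 : (0 : ℝ) < ‖x - y‖ := by rw [norm_pos_iff, sub_ne_zero]; exact hx
  have hz0 : (0 : ℝ) < k * ‖x - y‖ := by positivity
  have hRne : ((‖x - y‖ : ℝ) : ℂ) ≠ 0 := by
    simpa using hr0.ne'
  have hKne : ((k : ℝ) : ℂ) ≠ 0 := by simpa using hk.ne'
  -- second derivatives
  have key2 : ∀ i : Fin d,
      pd2 i i u x =
        (-(f1 (k * ‖x - y‖) / ((k * ‖x - y‖ : ℝ) : ℂ) - f2 (k * ‖x - y‖)) *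
              ((k : ℝ) : ℂ) ^ 2 / ((‖x - y‖ : ℝ) : ℂ) ^ 2
            + f1 (k * ‖x - y‖) * ((k : ℝ) : ℂ) / ((‖x - y‖ : ℝ) : ℂ) ^ 3) *
            ((x i - y i : ℝ) : ℂ) ^ 2
          + -(f1 (k * ‖x - y‖)) * ((k : ℝ) : ℂ) / ((‖x - y‖ : ℝ) : ℂ) := by
    intro i
    have hg : HasFDerivAt (fun x : EuclideanSpace ℝ (Fin d) => k * ‖x - y‖)
        (k • ((‖x - y‖)⁻¹ • (innerSL ℝ (x - y)))) x :=
      (helmholtz_aux_norm_hfd y x hx).const_mul k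
    have hA : HasFDerivAt
        (fun w : EuclideanSpace ℝ (Fin d) => -(f1 (k * ‖w - y‖)))
        (-((ContinuousLinearMap.smulRight (1 : ℝ →L[ℝ] ℝ)
              (f1 (k * ‖x - y‖) / ((k * ‖x - y‖ : ℝ) : ℂ) - f2 (k * ‖x - y‖))).comp
            (k • ((‖x - y‖)⁻¹ • (innerSL ℝ (x - y)))))) x :=
      (((hf1 _ hz0).hasFDerivAt).comp x hg).neg
    have hc : HasFDerivAt (fun w : EuclideanSpace ℝ (Fin d) => w i - y i)
        (EuclideanSpace.proj i : EuclideanSpace ℝ (Fin d) →L[ℝ] ℝ) x := by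
      simpa using ((EuclideanSpace.proj (𝕜 := ℝ) i).hasFDerivAt (x := x)).sub_const (y i)
    have hinv : HasFDerivAt (fun w : EuclideanSpace ℝ (Fin d) => (‖w - y‖)⁻¹)
        ((ContinuousLinearMap.smulRight (1 : ℝ →L[ℝ] ℝ) (-(‖x - y‖ ^ 2)⁻¹)).comp
          ((‖x - y‖)⁻¹ • (innerSL ℝ (x - y)))) x :=
      (hasDerivAt_inv hr0.ne').hasFDerivAt.comp x (helmholtz_aux_norm_hfd y x hx)
    have hq := hc.mul hinv
    have hb := hq.const_mul k
    have hB := Complex.ofRealCLM.hasFDerivAt.comp x hb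
    have hAB := hA.mul hB
    have hev : pd i u =ᶠ[nhds x]
        (fun w : EuclideanSpace ℝ (Fin d) =>
          -(f1 (k * ‖w - y‖)) *
            (⇑Complex.ofRealCLM ∘ fun w : EuclideanSpace ℝ (Fin d) =>
              k * ((w i - y i) * (‖w - y‖)⁻¹)) w) := by
      filter_upwards [isOpen_ne.mem_nhds hx] with w hw
      rw [key1 w hw i]
      simp [Function.comp]
    rw [pd2, pd, hev.fderiv_eq]
    erw [hAB.fderiv]
    simp only [ContinuousLinearMap.add_apply, ContinuousLinearMap.coe_smul',
      Pi.smul_apply, ContinuousLinearMap.comp_apply, ContinuousLinearMap.neg_apply,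
      ContinuousLinearMap.smulRight_apply, ContinuousLinearMap.one_apply,
      Complex.ofRealCLM_apply, ContinuousLinearMap.smul_apply,
      innerSL_apply_apply, smul_eq_mul, Complex.real_smul, Pi.mul_apply]
    rw [real_inner_comm]
    simp only [EuclideanSpace.inner_single_left, PiLp.proj_apply,
      EuclideanSpace.single_apply, PiLp.sub_apply, Function.comp, if_pos rfl,
      RCLike.star_def, conj_trivial, one_mul, if_true, Complex.ofRealCLM_apply]
    push_cast
    field_simp
    ring
  -- sum of squares
  have hsum : ∑ i : Fin d, ((x i - y i : ℝ) : ℂ) ^ 2 = ((‖x - y‖ : ℝ) : ℂ) ^ 2 := by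
    have hre : ∑ i : Fin d, (x i - y i : ℝ) ^ 2 = ‖x - y‖ ^ 2 := by
      rw [EuclideanSpace.norm_eq, Real.sq_sqrt (by positivity)]
      simp [PiLp.sub_apply]
    exact_mod_cast congrArg (fun t : ℝ => (t : ℂ)) hre
  -- put everything together
  have hf2 : f2 (k * ‖x - y‖) =
      (d : ℂ) * f1 (k * ‖x - y‖) / ((k * ‖x - y‖ : ℝ) : ℂ) - f0 (k * ‖x - y‖) := by
    rw [hrec _ hz0]; ring
  simp only [key2, hu x]
  rw [Finset.sum_add_distrib, ← Finset.mul_sum, hsum, Finset.sum_const, Finset.card_fin]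
  rw [hf2]
  have hZne : ((k * ‖x - y‖ : ℝ) : ℂ) ≠ 0 := by
    push_cast
    exact mul_ne_zero hKne hRne
  push_cast
  field_simp
  ring_nf
  field_simp
  ring
end
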